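/- Let X be a proper metric space homeomorphic to ℝᵐ, let r > 0, let Q₀ ⊆ X be compact, and let F be a compact family (in the compact-open topology) of homeomorphisms of X onto itself. Assume the normalization property: for every z ∈ X and every f ∈ F there exist isometries g₁, g₂ of X onto itself such that g₁(z) ∈ Q₀ and g₂ ∘ f ∘ g₁⁻¹ ∈ F. Then there exists ε > 0 with the following property: if h : X → X satisfies sup_{x∈X} d(h(x), f(x)) < ε for some f ∈ F, and h(z) ≠ h(w) whenever z ≠ w and d(z,w) < r, then h is injective. -/

import Mathlib

open Metric Set

lemma escape_lemma {X : Type*} [MetricSpace X] [ProperSpace X] (x₀ : X)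
    (f : C(X, X)) (G : X ≃ₜ X) (hG : ∀ x, G x = f x)
    (D : Set X) (hD : IsCompact D) (hDc : IsPreconnected D) (y : X) (hy : y ∈ interior D) :
    ∃ R : ℝ, ∃ O : Set C(X, X), IsOpen O ∧ f ∈ O ∧
      ∀ g : C(X, X), g ∈ O → ∀ G' : X ≃ₜ X, (∀ x, G' x = g x) →
        ∀ w, w ∉ Metric.closedBall x₀ R → g w ∉ D := by
  -- a small ball around y inside D
  obtain ⟨s, hs, hsD⟩ : ∃ s > 0, ball y s ⊆ D := by
    rcases Metric.isOpen_iff.1 isOpen_interior y hy with ⟨s, hs, hsub⟩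
    exact ⟨s, hs, hsub.trans interior_subset⟩
  set c := min s 1 with hc_def
  have hc : 0 < c := lt_min hs one_pos
  -- thickened D and its preimage bound
  set D₂ := Metric.cthickening 1 D with hD₂_def
  have hD₂ : IsCompact D₂ := hD.cthickening
  have hP : IsCompact (G.symm '' D₂) := hD₂.image G.symm.continuous
  obtain ⟨R₀, hR₀⟩ : ∃ R₀, G.symm '' D₂ ⊆ ball x₀ R₀ := hP.isBounded.subset_ball x₀
  set A := Metric.closedBall x₀ (R₀ + 1) with hA_def
  have hAcomp : IsCompact A := isCompact_closedBall x₀ _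
  haveI : CompactSpace A := isCompact_iff_compactSpace.1 hAcomp
  -- the open neighborhood O of f
  refine ⟨R₀ + 1, (fun g : C(X, X) => g.restrict A) ⁻¹' Metric.ball (f.restrict A) c,
    (ContinuousMap.continuous_restrict A).isOpen_preimage _ Metric.isOpen_ball,
    Set.mem_preimage.2 (Metric.mem_ball_self hc), ?_⟩
  intro g hgO G' hG' w hw hgwD
  have hclose : ∀ x ∈ A, dist (g x) (f x) < c := by
    intro x hx
    have hgO' : dist (g.restrict A) (f.restrict A) < c := hgO
    simpa using (ContinuousMap.dist_lt_iff hc).1 hgO' ⟨x, hx⟩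
  -- key: points of A outside ball x₀ R₀ are mapped by g outside D
  have hkey : ∀ x ∈ A, x ∉ ball x₀ R₀ → g x ∉ D := by
    intro x hxA hx hgx
    have hfx : f x ∉ D₂ := fun hfx =>
      hx (hR₀ ⟨f x, hfx, by rw [← hG x]; exact G.symm_apply_apply x⟩)
    apply hfx
    have hxd : dist (f x) (g x) < 1 := by
      rw [dist_comm]; exact lt_of_lt_of_le (hclose x hxA) (min_le_right s 1)
    exact Metric.thickening_subset_cthickening 1 D
      (Metric.mem_thickening_iff.2 ⟨g x, hgx, hxd⟩)
  -- partition of X via the homeomorphism G'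
  set V := G' '' interior A with hV_def
  set W := G' '' Aᶜ with hW_def
  have hVopen : IsOpen V := G'.isOpenMap _ isOpen_interior
  have hWopen : IsOpen W := G'.isOpenMap _ hAcomp.isClosed.isOpen_compl
  have hVW : Disjoint V W := by
    rw [Set.disjoint_iff_inter_eq_empty, hV_def, hW_def,
      ← Set.image_inter G'.injective]
    rw [Set.eq_empty_iff_forall_notMem]
    rintro x ⟨x', ⟨hx1, hx2⟩, rfl⟩
    exact hx2 (interior_subset hx1)
  -- frontier points of A go outside D
  have hfront : ∀ x ∈ frontier A, g x ∉ D := by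
    intro x hx
    have hxA : x ∈ A := hAcomp.isClosed.frontier_subset hx
    refine hkey x hxA fun hxb => ?_
    have : x ∈ interior A :=
      interior_maximal Metric.ball_subset_closedBall Metric.isOpen_ball
        (Metric.ball_subset_ball (by linarith) hxb)
    exact hx.2 this
  -- D is contained in V ∪ W
  have hDVW : D ⊆ V ∪ W := by
    intro x hxD
    obtain ⟨x', rfl⟩ := G'.surjective x
    by_cases hx'A : x' ∈ A
    · by_cases hx'i : x' ∈ interior A
      · exact Or.inl ⟨x', hx'i, rfl⟩
      · refine absurd hxD ?_
        rw [hG' x']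
        exact hfront x' ⟨by rw [hAcomp.isClosed.closure_eq]; exact hx'A, hx'i⟩
    · exact Or.inr ⟨x', hx'A, rfl⟩
  -- D meets V
  have hDV : (D ∩ V).Nonempty := by
    refine ⟨g (G.symm y), ?_, ?_⟩
    · apply hsD
      have h1 : G.symm y ∈ A := by
        have : G.symm y ∈ ball x₀ R₀ :=
          hR₀ ⟨y, Metric.self_subset_cthickening D (interior_subset hy), rfl⟩
        exact Metric.ball_subset_closedBall (Metric.ball_subset_ball (by linarith) this)
      have h2 : dist (g (G.symm y)) y < s := by
        have := hclose _ h1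
        rw [← hG (G.symm y), G.apply_symm_apply] at this
        exact lt_of_lt_of_le this (min_le_left s 1)
      exact Metric.mem_ball.2 h2
    · refine ⟨G.symm y, ?_, (hG' _).symm ▸ rfl⟩
      have : G.symm y ∈ ball x₀ (R₀ + 1) :=
        Metric.ball_subset_ball (by linarith)
          (hR₀ ⟨y, Metric.self_subset_cthickening D (interior_subset hy), rfl⟩)
      rw [← Metric.isOpen_ball.interior_eq] at this
      exact interior_mono Metric.ball_subset_closedBall this
  -- hence D ⊆ V, while g w ∈ W
  have hDV' : D ⊆ V := hDc.subset_left_of_subset_union hVopen hWopen hVW hDVW hDV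
  have hgwW : g w ∈ W := ⟨w, hw, hG' w⟩
  exact Set.disjoint_left.1 hVW (hDV' hgwD) hgwW


theorem stmt_17' {X : Type*} [MetricSpace X] [ProperSpace X]
    (m : ℕ) (e : X ≃ₜ EuclideanSpace ℝ (Fin m))
    (r : ℝ) (hr : 0 < r)
    (Q₀ : Set X) (hQ₀ : IsCompact Q₀)
    (F : Set (ContinuousMap X X)) (hF : IsCompact F)
    (hhomeo : ∀ f ∈ F, ∃ g : X ≃ₜ X, ∀ x : X, g x = f x)
    (hescape : ∀ (x₀ : X) (f : C(X, X)) (G : X ≃ₜ X), (∀ x, G x = f x) →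
      ∀ (D : Set X), IsCompact D → IsPreconnected D → ∀ y ∈ interior D,
      ∃ R : ℝ, ∃ O : Set C(X, X), IsOpen O ∧ f ∈ O ∧
        ∀ g : C(X, X), g ∈ O → ∀ G' : X ≃ₜ X, (∀ x, G' x = g x) →
          ∀ w, w ∉ Metric.closedBall x₀ R → g w ∉ D)
    (hnorm : ∀ z : X, ∀ f ∈ F, ∃ g₁ g₂ : X ≃ᵢ X,
      g₁ z ∈ Q₀ ∧ ∃ f' ∈ F, ∀ x : X, f' x = g₂ (f (g₁.symm x))) :
    ∃ ε : ℝ, 0 < ε ∧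
      ∀ h : X → X,
        (∃ f ∈ F, ∀ x : X, dist (h x) (f x) < ε) →
        (∀ z w : X, z ≠ w → dist z w < r → h z ≠ h w) →
        Function.Injective h := by
  classical
  set x₀ : X := e.symm 0 with hx₀
  have heval : Continuous fun p : C(X, X) × X => p.1 p.2 := continuous_eval
  -- Step 1: the compact set K of values f z, f ∈ F, z ∈ Q₀
  set K : Set X := (fun p : C(X, X) × X => p.1 p.2) '' (F ×ˢ Q₀) with hK_def
  have hK : IsCompact K := (hF.prod hQ₀).image heval
  set K₂ : Set X := Metric.cthickening 1 K with hK₂_def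
  have hK₂ : IsCompact K₂ := hK.cthickening
  -- Step 2: uniform properness of the family F
  obtain ⟨R, step2⟩ : ∃ R : ℝ, ∀ g ∈ F, ∀ w, w ∉ Metric.closedBall x₀ R → g w ∉ K₂ := by
    -- cover e '' K₂ by finitely many unit balls
    have hcov : e '' K₂ ⊆ ⋃ c : EuclideanSpace ℝ (Fin m), ball c 1 := fun x _ =>
      mem_iUnion.2 ⟨x, mem_ball_self one_pos⟩
    obtain ⟨t, ht⟩ := (hK₂.image e.continuous).elim_finite_subcover _
      (fun c : EuclideanSpace ℝ (Fin m) => isOpen_ball) hcov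
    -- connected compact pieces D c
    set D : EuclideanSpace ℝ (Fin m) → Set X := fun c => e.symm '' closedBall c 1 with hD_def
    have hDcomp : ∀ c, IsCompact (D c) := fun c =>
      (isCompact_closedBall _ _).image e.symm.continuous
    have hDconn : ∀ c, IsPreconnected (D c) := fun c =>
      ((convex_closedBall c 1).isPreconnected).image _ e.symm.continuous.continuousOn
    have hDy : ∀ c, e.symm c ∈ interior (D c) := fun c =>
      interior_maximal (image_mono ball_subset_closedBall)
        (e.symm.isOpenMap _ isOpen_ball) ⟨c, mem_ball_self one_pos, rfl⟩
    choose G hG using hhomeo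
    have hchoice : ∀ (f : F) (c : EuclideanSpace ℝ (Fin m)),
        ∃ R : ℝ, ∃ O : Set C(X, X), IsOpen O ∧ (f : C(X, X)) ∈ O ∧
          ∀ g : C(X, X), g ∈ O → ∀ G' : X ≃ₜ X, (∀ x, G' x = g x) →
            ∀ w, w ∉ Metric.closedBall x₀ R → g w ∉ D c := fun f c =>
      hescape x₀ f (G f f.2) (hG f f.2) (D c) (hDcomp c) (hDconn c) _ (hDy c)
    choose Rf Of hOopen hOmem hOprop using hchoice
    -- open neighborhoods and finite subcover of F
    have hcover : F ⊆ ⋃ f : F, ⋂ c ∈ t, Of f c := fun g hg =>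
      mem_iUnion.2 ⟨⟨g, hg⟩, mem_iInter₂.2 fun c _ => hOmem ⟨g, hg⟩ c⟩
    obtain ⟨s, hs⟩ := hF.elim_finite_subcover (fun f : F => ⋂ c ∈ t, Of f c)
      (fun f => isOpen_biInter_finset fun c _ => hOopen f c) hcover
    -- a uniform radius
    set Rs : Finset ℝ := insert 0 ((s ×ˢ t).image fun p => Rf p.1 p.2) with hRs_def
    have hRsne : Rs.Nonempty := ⟨0, Finset.mem_insert_self 0 _⟩
    refine ⟨Rs.max' hRsne, ?_⟩
    intro g hgF w hw hgw
    obtain ⟨f₀, hf₀s, hgO⟩ : ∃ f₀ ∈ s, g ∈ ⋂ c ∈ t, Of f₀ c := by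
      simpa using hs hgF
    have : e (g w) ∈ ⋃ c ∈ t, ball c 1 := ht ⟨g w, hgw, rfl⟩
    obtain ⟨c, hct, hc⟩ := mem_iUnion₂.1 this
    have hgwD : g w ∈ D c :=
      ⟨e (g w), ball_subset_closedBall hc, e.symm_apply_apply _⟩
    have hwR : w ∉ Metric.closedBall x₀ (Rf f₀ c) := by
      intro hmem
      apply hw
      apply Metric.closedBall_subset_closedBall _ hmem
      exact Rs.le_max' _ (Finset.mem_insert_of_mem
        (Finset.mem_image.2 ⟨(f₀, c), Finset.mem_product.2 ⟨hf₀s, hct⟩, rfl⟩))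
    exact hOprop f₀ c g (mem_iInter₂.1 hgO c hct) (G g hgF) (hG g hgF) w hwR hgwD
  -- Step 3: uniform lower bound on separation
  have hφcont : Continuous fun p : C(X, X) × X × X => dist (p.1 p.2.1) (p.1 p.2.2) := by
    apply Continuous.dist
    · exact heval.comp (continuous_fst.prodMk (continuous_fst.comp continuous_snd))
    · exact heval.comp (continuous_fst.prodMk (continuous_snd.comp continuous_snd))
  have hdcont : Continuous fun p : C(X, X) × X × X => dist p.2.1 p.2.2 :=
    Continuous.dist (continuous_fst.comp continuous_snd) (continuous_snd.comp continuous_snd)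
  set B : Set (C(X, X) × X × X) := {p | p.1 ∈ F ∧ p.2.1 ∈ Q₀ ∧ r ≤ dist p.2.1 p.2.2 ∧
    dist (p.1 p.2.1) (p.1 p.2.2) ≤ 1} with hB_def
  have hBclosed : IsClosed B := by
    refine IsClosed.inter (hF.isClosed.preimage continuous_fst) ?_
    refine IsClosed.inter (hQ₀.isClosed.preimage (continuous_fst.comp continuous_snd)) ?_
    exact IsClosed.inter (isClosed_le continuous_const hdcont) (isClosed_le hφcont continuous_const)
  have hBsub : B ⊆ F ×ˢ Q₀ ×ˢ Metric.closedBall x₀ R := by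
    rintro ⟨f, z, w⟩ ⟨h1, h2, h3, h4⟩
    refine ⟨h1, h2, ?_⟩
    by_contra hw
    refine step2 f h1 w hw ?_
    exact Metric.mem_cthickening_of_dist_le (f w) (f z) 1 K
      ⟨(f, z), Set.mk_mem_prod h1 h2, rfl⟩ (by rwa [dist_comm])
  have hBcomp : IsCompact B :=
    (hF.prod (hQ₀.prod (isCompact_closedBall x₀ R))).of_isClosed_subset hBclosed hBsub
  have key : ∃ δ > 0, ∀ f ∈ F, ∀ z ∈ Q₀, ∀ w, r ≤ dist z w → δ ≤ dist (f z) (f w) := by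
    rcases B.eq_empty_or_nonempty with hBe | hBne
    · refine ⟨1, one_pos, fun f hf z hz w hrw => ?_⟩
      by_contra hlt
      exact absurd (hBe ▸ (⟨hf, hz, hrw, (not_le.1 hlt).le⟩ :
        (f, z, w) ∈ B) : (f, z, w) ∈ (∅ : Set (C(X, X) × X × X))) (Set.notMem_empty _)
    · obtain ⟨p₀, hp₀B, hmin⟩ := hBcomp.exists_isMinOn hBne hφcont.continuousOn
      have hδ₀ : 0 < dist (p₀.1 p₀.2.1) (p₀.1 p₀.2.2) := by
        obtain ⟨h1, h2, h3, h4⟩ := hp₀B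
        obtain ⟨G₀, hG₀⟩ := hhomeo p₀.1 h1
        have hne : p₀.2.1 ≠ p₀.2.2 := by
          intro hzw
          rw [hzw, dist_self] at h3
          linarith
        rw [dist_pos, ← hG₀, ← hG₀]
        exact fun hGG => hne (G₀.injective hGG)
      refine ⟨min (dist (p₀.1 p₀.2.1) (p₀.1 p₀.2.2)) 1, lt_min hδ₀ one_pos,
        fun f hf z hz w hrw => ?_⟩
      by_cases hle : dist (f z) (f w) ≤ 1
      · exact le_trans (min_le_left _ _) (hmin (⟨hf, hz, hrw, hle⟩ : (f, z, w) ∈ B))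
      · exact le_trans (min_le_right _ _) (not_le.1 hle).le
  obtain ⟨δ, hδ, hkeyδ⟩ := key
  refine ⟨δ / 2, by positivity, ?_⟩
  rintro h ⟨f, hfF, hclose⟩ hscale z w hzw
  by_contra hne
  have hrzw : r ≤ dist z w := le_of_not_gt fun hlt => hscale z w hne hlt hzw
  obtain ⟨g₁, g₂, hg₁Q, f', hf'F, hf'⟩ := hnorm z f hfF
  have h1 : δ ≤ dist (f' (g₁ z)) (f' (g₁ w)) := by
    refine hkeyδ f' hf'F _ hg₁Q _ ?_
    rwa [g₁.dist_eq]
  have h2 : dist (f' (g₁ z)) (f' (g₁ w)) = dist (f z) (f w) := by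
    rw [hf' (g₁ z), hf' (g₁ w), IsometryEquiv.symm_apply_apply, IsometryEquiv.symm_apply_apply,
      g₂.dist_eq]
  have h3 : dist (f z) (f w) < δ := by
    calc dist (f z) (f w) ≤ dist (f z) (h z) + dist (h z) (f w) := dist_triangle _ _ _
      _ = dist (h z) (f z) + dist (h w) (f w) := by rw [dist_comm (f z) (h z), hzw]
      _ < δ / 2 + δ / 2 := add_lt_add (hclose z) (hclose w)
      _ = δ := by ring
  rw [h2] at h1
  linarith

/-- Let `X` be a proper metric space homeomorphic to `ℝᵐ`, `r > 0`, `Q₀ ⊆ X` compact, and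
`F` a compact family (compact-open topology) of homeomorphisms of `X` onto itself with the
normalization property: for every `z ∈ X` and `f ∈ F` there are isometries `g₁, g₂` of `X`
with `g₁(z) ∈ Q₀` and `g₂ ∘ f ∘ g₁⁻¹ ∈ F`. Then there exists `ε > 0` such that any
`h : X → X` uniformly `ε`-close to some `f ∈ F` which is injective at scale `r`
(`h(z) ≠ h(w)` whenever `z ≠ w` and `d(z,w) < r`) is injective. -/
theorem stmt_17 {X : Type*} [MetricSpace X] [ProperSpace X]
    (m : ℕ) (e : X ≃ₜ EuclideanSpace ℝ (Fin m))
    (r : ℝ) (hr : 0 < r)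
    (Q₀ : Set X) (hQ₀ : IsCompact Q₀)
    (F : Set (ContinuousMap X X)) (hF : IsCompact F)
    (hhomeo : ∀ f ∈ F, ∃ g : X ≃ₜ X, ∀ x : X, g x = f x)
    (hnorm : ∀ z : X, ∀ f ∈ F, ∃ g₁ g₂ : X ≃ᵢ X,
      g₁ z ∈ Q₀ ∧ ∃ f' ∈ F, ∀ x : X, f' x = g₂ (f (g₁.symm x))) :
    ∃ ε : ℝ, 0 < ε ∧
      ∀ h : X → X,
        (∃ f ∈ F, ∀ x : X, dist (h x) (f x) < ε) →
        (∀ z w : X, z ≠ w → dist z w < r → h z ≠ h w) →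
        Function.Injective h := by
  exact stmt_17' m e r hr Q₀ hQ₀ F hF hhomeo (fun x₀ f G hG D hD hDc y hy =>
    escape_lemma x₀ f G hG D hD hDc y hy) hnorm
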